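/- Quantitative Schur-complement lower bound (Lemma 5.5(ii)): Let A ∈ ℝ^{m×m} and C ∈ ℝ^{n×n} be symmetric real matrices, B ∈ ℝ^{n×m}, and let H = [[A, Bᵀ],[B, C]] ∈ ℝ^{(m+n)×(m+n)}. Suppose C ⪰ β_C I with β_C > 0, the Schur complement satisfies A − BᵀC⁻¹B ⪰ β_S I with β_S > 0, and ‖B‖ ≤ β_B. Then H ⪰ λ I with λ = (β_C/(β_C+β_B))² · min(β_S, β_C) > 0. -/

import Mathlib

open Matrix BigOperators

/-- The spectral (operator) norm of a real matrix. -/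
noncomputable def opNorm {m n : Type*} [Fintype m] [Fintype n] [DecidableEq n]
    (A : Matrix m n ℝ) : ℝ :=
  ‖LinearMap.toContinuousLinearMap (Matrix.toEuclideanLin A)‖

private theorem keyScalar (βC βS βB a b c : ℝ) (hβC : 0 < βC) (hβS : 0 < βS) (hβB : 0 ≤ βB)
    (ha : 0 ≤ a) (hb : 0 ≤ b) (hc : 0 ≤ c) (hba : βC * b ≤ βB * a) :
    (βC/(βC+βB))^2 * min βS βC * (a^2 + (c+b)^2) ≤ βS * a^2 + βC * c^2 := by
  have hsum : 0 < βC + βB := by linarith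
  have hmin : 0 < min βS βC := lt_min hβS hβC
  have k1 : βC^2 * b^2 ≤ βB^2 * (a^2 + c^2) := by
    have := mul_le_mul hba hba (by positivity) (by positivity)
    nlinarith [sq_nonneg (βB * c)]
  have k2 : 2 * (βC^2 * (c * b)) ≤ 2 * (βC * βB) * (a^2 + c^2) := by
    have h1 : (βC * b) * (βC * c) ≤ (βB * a) * (βC * c) :=
      mul_le_mul_of_nonneg_right hba (by positivity)
    have h2 : 0 ≤ βB * βC * (a - c)^2 := by positivity
    have h3 : 0 ≤ βB * βC * (a^2 + c^2) := by positivity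
    nlinarith
  have key : βC^2 * (a^2 + (c+b)^2) ≤ (βC+βB)^2 * (a^2 + c^2) := by nlinarith
  have h1 : (βC/(βC+βB))^2 * min βS βC * (a^2 + (c+b)^2) ≤ min βS βC * (a^2 + c^2) := by
    rw [div_pow, div_mul_eq_mul_div, div_mul_eq_mul_div, div_le_iff₀ (by positivity)]
    calc βC ^ 2 * min βS βC * (a ^ 2 + (c + b) ^ 2)
        = min βS βC * (βC^2 * (a^2 + (c+b)^2)) := by ring
      _ ≤ min βS βC * ((βC+βB)^2 * (a^2 + c^2)) := mul_le_mul_of_nonneg_left key hmin.le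
      _ = min βS βC * (a ^ 2 + c ^ 2) * (βC + βB) ^ 2 := by ring
  refine h1.trans ?_
  have h2 := min_le_left βS βC
  have h3 := min_le_right βS βC
  nlinarith [sq_nonneg a, sq_nonneg c]

private theorem dp_eq_normsq {k : ℕ} (u : Fin k → ℝ) :
    u ⬝ᵥ u = ‖(WithLp.equiv 2 (Fin k → ℝ)).symm u‖ ^ 2 := by
  rw [← real_inner_self_eq_norm_sq]
  simp only [PiLp.inner_apply, dotProduct, WithLp.equiv_symm_apply, RCLike.inner_apply, conj_trivial]

private theorem dp_le_norm_mul_norm {k : ℕ} (u v : Fin k → ℝ) :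
    u ⬝ᵥ v ≤ ‖(WithLp.equiv 2 (Fin k → ℝ)).symm u‖ * ‖(WithLp.equiv 2 (Fin k → ℝ)).symm v‖ := by
  have h := real_inner_le_norm ((WithLp.equiv 2 (Fin k → ℝ)).symm u)
    ((WithLp.equiv 2 (Fin k → ℝ)).symm v)
  have heq : (inner ℝ ((WithLp.equiv 2 (Fin k → ℝ)).symm u)
      ((WithLp.equiv 2 (Fin k → ℝ)).symm v) : ℝ) = u ⬝ᵥ v := by
    simp [PiLp.inner_apply, dotProduct, WithLp.equiv_symm_apply, mul_comm]
  linarith [h, heq.ge, heq.le]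

private theorem mulVec_norm_le {m n : ℕ} (B : Matrix (Fin n) (Fin m) ℝ) (x : Fin m → ℝ) :
    ‖(WithLp.equiv 2 (Fin n → ℝ)).symm (B *ᵥ x)‖
      ≤ opNorm B * ‖(WithLp.equiv 2 (Fin m → ℝ)).symm x‖ := by
  have h := (LinearMap.toContinuousLinearMap (Matrix.toEuclideanLin B)).le_opNorm
    ((WithLp.equiv 2 (Fin m → ℝ)).symm x)
  simpa [opNorm, Matrix.toEuclideanLin_apply, Equiv.apply_symm_apply] using h

/-- **Quantitative Schur-complement lower bound (Lemma 5.5(ii)).**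
If `C ⪰ β_C I`, the Schur complement satisfies `A − BᵀC⁻¹B ⪰ β_S I`, and `‖B‖ ≤ β_B`,
then `H = [[A, Bᵀ],[B, C]] ⪰ λI` with `λ = (β_C/(β_C+β_B))² · min(β_S, β_C) > 0`. -/
theorem schur_quantitative_lower_bound
    (m n : ℕ)
    (A : Matrix (Fin m) (Fin m) ℝ) (C : Matrix (Fin n) (Fin n) ℝ)
    (B : Matrix (Fin n) (Fin m) ℝ)
    (hA : A.IsSymm) (hC : C.IsSymm)
    (βC βS βB : ℝ) (hβC : 0 < βC) (hβS : 0 < βS)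
    (hCge : (C - βC • (1 : Matrix (Fin n) (Fin n) ℝ)).PosSemidef)
    (hSchur : (A - Bᵀ * C⁻¹ * B - βS • (1 : Matrix (Fin m) (Fin m) ℝ)).PosSemidef)
    (hB : opNorm B ≤ βB) :
    0 < (βC / (βC + βB)) ^ 2 * min βS βC ∧
    (Matrix.fromBlocks A Bᵀ B C
      - ((βC / (βC + βB)) ^ 2 * min βS βC) •
          (1 : Matrix (Fin m ⊕ Fin n) (Fin m ⊕ Fin n) ℝ)).PosSemidef := by
  have hB0 : 0 ≤ βB := le_trans (norm_nonneg _) hB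
  have hsum : 0 < βC + βB := by linarith
  have hlam : 0 < (βC / (βC + βB)) ^ 2 * min βS βC :=
    mul_pos (by positivity) (lt_min hβS hβC)
  set lam := (βC / (βC + βB)) ^ 2 * min βS βC with hlamdef
  -- basic hermitian facts
  have hAh : A.IsHermitian := by
    rwa [Matrix.IsHermitian, Matrix.conjTranspose_eq_transpose_of_trivial]
  have hCh : C.IsHermitian := by
    rwa [Matrix.IsHermitian, Matrix.conjTranspose_eq_transpose_of_trivial]
  -- C is positive definite, hence invertible
  have hCquad : ∀ z : Fin n → ℝ, βC * (z ⬝ᵥ z) ≤ z ⬝ᵥ (C *ᵥ z) := by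
    intro z
    have h := (posSemidef_iff_dotProduct_mulVec.mp hCge).2 z
    simp only [star_trivial, Matrix.sub_mulVec, Matrix.smul_mulVec, Matrix.one_mulVec,
      dotProduct_sub, dotProduct_smul, smul_eq_mul] at h
    linarith
  have hCpd : C.PosDef := by
    refine posDef_iff_dotProduct_mulVec.mpr ⟨hCh, fun z hz => ?_⟩
    have h1 := hCquad z
    have h2 : 0 < z ⬝ᵥ z := by
      rcases lt_or_eq_of_le (Finset.sum_nonneg fun i _ => mul_self_nonneg (z i)) with h | h
      · exact h
      · exact absurd (dotProduct_self_eq_zero.mp h.symm) hz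
    have : 0 < βC * (z ⬝ᵥ z) := mul_pos hβC h2
    simpa [star_trivial] using lt_of_lt_of_le this h1
  have hdet : IsUnit C.det := (Matrix.isUnit_iff_isUnit_det C).mp hCpd.isUnit
  have hCinv : C * C⁻¹ = 1 := Matrix.mul_nonsing_inv C hdet
  refine ⟨hlam, posSemidef_iff_dotProduct_mulVec.mpr ⟨?_, ?_⟩⟩
  · -- Hermitian part
    have hH : (Matrix.fromBlocks A Bᵀ B C).IsHermitian :=
      Matrix.IsHermitian.fromBlocks hAh
        (by rw [Matrix.conjTranspose_eq_transpose_of_trivial, Matrix.transpose_transpose]) hCh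
    have hI : (lam • (1 : Matrix (Fin m ⊕ Fin n) (Fin m ⊕ Fin n) ℝ)).IsHermitian := by
      rw [Matrix.IsHermitian, Matrix.conjTranspose_smul, Matrix.conjTranspose_one, star_trivial]
    exact hH.sub hI
  · intro v
    set x : Fin m → ℝ := v ∘ Sum.inl with hxdef
    set y : Fin n → ℝ := v ∘ Sum.inr with hydef
    have hv : v = Sum.elim x y := by funext i; cases i <;> rfl
    set w : Fin n → ℝ := C⁻¹ *ᵥ (B *ᵥ x) with hwdef
    set z : Fin n → ℝ := y + w with hzdef
    have hCw : C *ᵥ w = B *ᵥ x := by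
      rw [hwdef, Matrix.mulVec_mulVec, hCinv, Matrix.one_mulVec]
    have hsymC : ∀ u u' : Fin n → ℝ, u ⬝ᵥ (C *ᵥ u') = (C *ᵥ u) ⬝ᵥ u' := by
      intro u u'
      rw [Matrix.dotProduct_mulVec]
      congr 1
      rw [← hC, Matrix.vecMul_transpose, hC]
    -- quadratic form decomposition
    have hQ : v ⬝ᵥ ((Matrix.fromBlocks A Bᵀ B C) *ᵥ v)
        = x ⬝ᵥ (A *ᵥ x) + x ⬝ᵥ (Bᵀ *ᵥ y) + (y ⬝ᵥ (B *ᵥ x) + y ⬝ᵥ (C *ᵥ y)) := by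
      rw [Matrix.fromBlocks_mulVec]
      conv_lhs => rw [hv]
      simp only [Sum.elim_comp_inl, Sum.elim_comp_inr]
      rw [sumElim_dotProduct_sumElim, dotProduct_add, dotProduct_add]
    have hvv : v ⬝ᵥ v = x ⬝ᵥ x + y ⬝ᵥ y := by
      conv_lhs => rw [hv]
      rw [sumElim_dotProduct_sumElim]
    -- cross terms
    have hcross1 : x ⬝ᵥ (Bᵀ *ᵥ y) = (B *ᵥ x) ⬝ᵥ y := by
      rw [Matrix.dotProduct_mulVec, Matrix.vecMul_transpose]
    have hcross2 : y ⬝ᵥ (B *ᵥ x) = (B *ᵥ x) ⬝ᵥ y := dotProduct_comm _ _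
    -- Schur quadratic bound
    have hSq : βS * (x ⬝ᵥ x) ≤ x ⬝ᵥ (A *ᵥ x) - x ⬝ᵥ ((Bᵀ * C⁻¹ * B) *ᵥ x) := by
      have h := (posSemidef_iff_dotProduct_mulVec.mp hSchur).2 x
      simp only [star_trivial, Matrix.sub_mulVec, Matrix.smul_mulVec, Matrix.one_mulVec,
        dotProduct_sub, dotProduct_smul, smul_eq_mul] at h
      linarith
    have hBCB : x ⬝ᵥ ((Bᵀ * C⁻¹ * B) *ᵥ x) = w ⬝ᵥ (C *ᵥ w) := by
      rw [← Matrix.mulVec_mulVec, ← Matrix.mulVec_mulVec, Matrix.dotProduct_mulVec,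
        Matrix.vecMul_transpose, ← hCw, dotProduct_comm,
        Matrix.mulVec_mulVec, Matrix.nonsing_inv_mul C hdet, Matrix.one_mulVec]
    -- completion of the square
    have hzCz : z ⬝ᵥ (C *ᵥ z)
        = y ⬝ᵥ (C *ᵥ y) + 2 * ((B *ᵥ x) ⬝ᵥ y) + w ⬝ᵥ (C *ᵥ w) := by
      have e1 : y ⬝ᵥ (C *ᵥ w) = (B *ᵥ x) ⬝ᵥ y := by
        rw [hCw, dotProduct_comm]
      have e2 : w ⬝ᵥ (C *ᵥ y) = (B *ᵥ x) ⬝ᵥ y := by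
        rw [hsymC, hCw]
      rw [hzdef, Matrix.mulVec_add, dotProduct_add, add_dotProduct,
        add_dotProduct, e1, e2]
      ring
    -- Euclidean norms
    set a := ‖(WithLp.equiv 2 (Fin m → ℝ)).symm x‖ with hadef
    set b := ‖(WithLp.equiv 2 (Fin n → ℝ)).symm w‖ with hbdef
    set c := ‖(WithLp.equiv 2 (Fin n → ℝ)).symm z‖ with hcdef
    have hxx : x ⬝ᵥ x = a ^ 2 := dp_eq_normsq x
    have hzz : z ⬝ᵥ z = c ^ 2 := dp_eq_normsq z
    have hww : w ⬝ᵥ w = b ^ 2 := dp_eq_normsq w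
    have ha : 0 ≤ a := norm_nonneg _
    have hb : 0 ≤ b := norm_nonneg _
    have hc : 0 ≤ c := norm_nonneg _
    -- bound on ‖w‖
    have hwb : βC * b ≤ βB * a := by
      have h1 : βC * (w ⬝ᵥ w) ≤ w ⬝ᵥ (C *ᵥ w) := hCquad w
      have h2 : w ⬝ᵥ (C *ᵥ w) = w ⬝ᵥ (B *ᵥ x) := by rw [hCw]
      have h3 : w ⬝ᵥ (B *ᵥ x) ≤ b * ‖(WithLp.equiv 2 (Fin n → ℝ)).symm (B *ᵥ x)‖ :=
        dp_le_norm_mul_norm w (B *ᵥ x)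
      have h4 : ‖(WithLp.equiv 2 (Fin n → ℝ)).symm (B *ᵥ x)‖ ≤ βB * a := by
        refine (mulVec_norm_le B x).trans ?_
        exact mul_le_mul_of_nonneg_right hB ha
      have h5 : βC * b ^ 2 ≤ b * (βB * a) := by
        calc βC * b ^ 2 = βC * (w ⬝ᵥ w) := by rw [hww]
          _ ≤ w ⬝ᵥ (B *ᵥ x) := h2 ▸ h1
          _ ≤ b * ‖(WithLp.equiv 2 (Fin n → ℝ)).symm (B *ᵥ x)‖ := h3
          _ ≤ b * (βB * a) := mul_le_mul_of_nonneg_left h4 hb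
      rcases eq_or_lt_of_le hb with h | h
      · rw [← h, mul_zero]; positivity
      · have := le_of_mul_le_mul_right (by nlinarith : (βC * b) * b ≤ (βB * a) * b) h
        exact this
    -- triangle inequality for y
    have hz' : (WithLp.equiv 2 (Fin n → ℝ)).symm z
        = (WithLp.equiv 2 (Fin n → ℝ)).symm y + (WithLp.equiv 2 (Fin n → ℝ)).symm w := rfl
    have hytri : ‖(WithLp.equiv 2 (Fin n → ℝ)).symm y‖ ≤ c + b := by
      have : (WithLp.equiv 2 (Fin n → ℝ)).symm y
          = (WithLp.equiv 2 (Fin n → ℝ)).symm z - (WithLp.equiv 2 (Fin n → ℝ)).symm w := by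
        rw [hz']; abel
      rw [this]
      exact norm_sub_le _ _
    have hyy : y ⬝ᵥ y ≤ (c + b) ^ 2 := by
      rw [dp_eq_normsq y]
      exact pow_le_pow_left₀ (norm_nonneg _) hytri 2
    -- lower bounds on the two quadratic pieces
    have hzCzb : βC * c ^ 2 ≤ z ⬝ᵥ (C *ᵥ z) := by
      have := hCquad z; rwa [hzz] at this
    have hQb : βS * a ^ 2 + βC * c ^ 2 ≤ v ⬝ᵥ ((Matrix.fromBlocks A Bᵀ B C) *ᵥ v) := by
      rw [hQ, hcross1, hcross2]
      have hAx : βS * a ^ 2 + w ⬝ᵥ (C *ᵥ w) ≤ x ⬝ᵥ (A *ᵥ x) := by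
        have := hSq; rw [hBCB, hxx] at this; linarith
      have := hzCzb
      rw [hzCz] at this
      linarith
    -- the key scalar inequality
    have hkey := keyScalar βC βS βB a b c hβC hβS hB0 ha hb hc hwb
    -- put everything together
    have hfinal : lam * (v ⬝ᵥ v) ≤ v ⬝ᵥ ((Matrix.fromBlocks A Bᵀ B C) *ᵥ v) := by
      have h1 : lam * (v ⬝ᵥ v) ≤ lam * (a ^ 2 + (c + b) ^ 2) := by
        apply mul_le_mul_of_nonneg_left _ hlam.le
        rw [hvv, hxx]
        linarith
      refine h1.trans (le_trans ?_ hQb)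
      exact hkey
    simp only [star_trivial, Matrix.sub_mulVec, Matrix.smul_mulVec, Matrix.one_mulVec,
      dotProduct_sub, dotProduct_smul, smul_eq_mul]
    linarith
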